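/- Let T: D_cdf([a,b]) → ℝ satisfy |T(F) − T(G)| ≤ ‖F − G‖_∞ for all F in a convex subset 𝒟 ⊆ D_cdf([a,b]) and all G ∈ D_cdf([a,b]), and let S: D_cdf([a,b])² → [0,∞) satisfy |S(F, F̃) − S(G, G̃)| ≤ ‖F − G‖_∞ + ‖F̃ − G̃‖_∞ for (F,F̃) ∈ 𝒟² and (G,G̃) ∈ D_cdf([a,b])², with S(F,F) = 0 for all F. Fix λ ∈ [0,1], arrays F ⊏ 𝒟 and F̃ ⊏ D_cdf([a,b]) (all conditional cdfs of F lie in 𝒟), and decision rules δ, δ̃ ∈ S_K^𝒳. Define Ω_{λ,F}(δ) = (1−λ) T(⟨δ,F⟩) − λ max_{z∈𝒵} S(⟨δ,F⟩_z, ⟨δ,F⟩). Then |Ω_{λ,F}(δ) − Ω_{λ,F̃}(δ̃)| ≤ (1+λ)[d₁(δ, δ̃) + max_{z∈𝒵} u_z(F, F̃)] + ‖p_Z − p̃_Z‖₁. In particular, δ ↦ Ω_{λ,F}(δ) is Lipschitz continuous on S_K^𝒳 with constant 1+λ. -/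

import Mathlib

/-- `F` is a cdf supported on `[a,b]`. -/
def IsCdfOn (a b : ℝ) (F : ℝ → ℝ) : Prop :=
  Monotone F ∧ (∀ y, y < a → F y = 0) ∧ (∀ y, b ≤ y → F y = 1) ∧
    (∀ y, 0 ≤ F y ∧ F y ≤ 1)

/-- Subpopulation mixture cdf `⟨δ,F⟩_z`. -/
noncomputable def mixZ {X Z : Type} [Fintype X] [Fintype Z] (K : ℕ)
    (F : Fin K → X → Z → ℝ → ℝ) (p : X → Z → ℝ) (δ : X → Fin K → ℝ) (z : Z) :
    ℝ → ℝ :=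
  fun y => ∑ x, ∑ i, δ x i * (p x z / ∑ x', p x' z) * F i x z y

/-- Population mixture cdf `⟨δ,F⟩ = ∑_z p_Z(z) ⟨δ,F⟩_z`. -/
noncomputable def mixAll {X Z : Type} [Fintype X] [Fintype Z] (K : ℕ)
    (F : Fin K → X → Z → ℝ → ℝ) (p : X → Z → ℝ) (δ : X → Fin K → ℝ) :
    ℝ → ℝ :=
  fun y => ∑ z, (∑ x, p x z) * mixZ K F p δ z y

/-- The penalized objective `Ω_{λ,F}(δ)`. -/
noncomputable def Obj {X Z : Type} [Fintype X] [Fintype Z] (K : ℕ)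
    (T : (ℝ → ℝ) → ℝ) (S : (ℝ → ℝ) → (ℝ → ℝ) → ℝ) (lam : ℝ)
    (F : Fin K → X → Z → ℝ → ℝ) (p : X → Z → ℝ) (δ : X → Fin K → ℝ) : ℝ :=
  (1 - lam) * T (mixAll K F p δ) -
    lam * ⨆ z : Z, S (mixZ K F p δ z) (mixAll K F p δ)

/-- Subgroup discrepancy `u_z(F,F̃)`. -/
noncomputable def uzDisc {X Z : Type} [Fintype X] [Fintype Z] (K : ℕ)
    (F Ft : Fin K → X → Z → ℝ → ℝ) (p pt : X → Z → ℝ) (z : Z) : ℝ :=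
  ∑ x, ⨆ i : Fin K, ⨆ y : ℝ,
    |(p x z / ∑ x', p x' z) * F i x z y - (pt x z / ∑ x', pt x' z) * Ft i x z y|

lemma isCdfOn_convex (a b : ℝ) : Convex ℝ {F : ℝ → ℝ | IsCdfOn a b F} := by
  intro f hf g hg c d hc hd hcd
  obtain ⟨hfm, hfa, hfb, hfI⟩ := hf
  obtain ⟨hgm, hga, hgb, hgI⟩ := hg
  refine ⟨?_, ?_, ?_, ?_⟩
  · intro y y' hy
    simp only [Pi.add_apply, Pi.smul_apply, smul_eq_mul]
    exact add_le_add (mul_le_mul_of_nonneg_left (hfm hy) hc)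
      (mul_le_mul_of_nonneg_left (hgm hy) hd)
  · intro y hy
    simp [Pi.add_apply, Pi.smul_apply, smul_eq_mul, hfa y hy, hga y hy]
  · intro y hy
    simp [Pi.add_apply, Pi.smul_apply, smul_eq_mul, hfb y hy, hgb y hy, hcd]
  · intro y
    have h1 := (hfI y).1; have h2 := (hgI y).1
    have h3 := (hfI y).2; have h4 := (hgI y).2
    constructor
    · have : (0:ℝ) ≤ c * f y + d * g y :=
        add_nonneg (mul_nonneg hc h1) (mul_nonneg hd h2)
      simpa [Pi.add_apply, Pi.smul_apply, smul_eq_mul] using this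
    · have : c * f y + d * g y ≤ 1 := by nlinarith
      simpa [Pi.add_apply, Pi.smul_apply, smul_eq_mul] using this

lemma mixZ_mem {X Z : Type} [Fintype X] [Fintype Z] {K : ℕ}
    {D : Set (ℝ → ℝ)} (hDconv : Convex ℝ D)
    {F : Fin K → X → Z → ℝ → ℝ} {p : X → Z → ℝ} {δ : X → Fin K → ℝ} {z : Z}
    (hF : ∀ i x, F i x z ∈ D) (hp : ∀ x, 0 ≤ p x z) (hpZ : 0 < ∑ x, p x z)
    (hδ : ∀ x, (∀ i, 0 ≤ δ x i) ∧ ∑ i, δ x i = 1) :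
    mixZ K F p δ z ∈ D := by
  have heq : mixZ K F p δ z
      = ∑ q : X × Fin K, (δ q.1 q.2 * (p q.1 z / ∑ x', p x' z)) • F q.2 q.1 z := by
    funext y
    simp only [mixZ, Fintype.sum_prod_type, Finset.sum_apply, Pi.smul_apply,
      smul_eq_mul, mul_assoc]
  rw [heq]
  refine hDconv.sum_mem (fun q _ => ?_) ?_ (fun q _ => hF q.2 q.1)
  · exact mul_nonneg ((hδ q.1).1 q.2) (div_nonneg (hp q.1) hpZ.le)
  · rw [Fintype.sum_prod_type]
    have : ∀ x : X, ∑ i, δ x i * (p x z / ∑ x', p x' z) = p x z / ∑ x', p x' z := by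
      intro x
      rw [← Finset.sum_mul, (hδ x).2, one_mul]
    simp only [this]
    rw [← Finset.sum_div, div_self hpZ.ne']

lemma mixAll_mem {X Z : Type} [Fintype X] [Fintype Z] {K : ℕ}
    {D : Set (ℝ → ℝ)} (hDconv : Convex ℝ D)
    {F : Fin K → X → Z → ℝ → ℝ} {p : X → Z → ℝ} {δ : X → Fin K → ℝ}
    (hF : ∀ i x z, F i x z ∈ D) (hp : ∀ x z, 0 ≤ p x z)
    (hps : ∑ x, ∑ z, p x z = 1) (hpZ : ∀ z, 0 < ∑ x, p x z)
    (hδ : ∀ x, (∀ i, 0 ≤ δ x i) ∧ ∑ i, δ x i = 1) :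
    mixAll K F p δ ∈ D := by
  have heq : mixAll K F p δ
      = ∑ q : Z × X × Fin K, (δ q.2.1 q.2.2 * p q.2.1 q.1) • F q.2.2 q.2.1 q.1 := by
    funext y
    simp only [mixAll, mixZ, Finset.mul_sum, Fintype.sum_prod_type, Finset.sum_apply,
      Pi.smul_apply, smul_eq_mul]
    refine Finset.sum_congr rfl fun z _ => Finset.sum_congr rfl fun x _ =>
      Finset.sum_congr rfl fun i _ => ?_
    have hz := (hpZ z).ne'
    field_simp
  rw [heq]
  refine hDconv.sum_mem (fun q _ => mul_nonneg ((hδ q.2.1).1 q.2.2) (hp q.2.1 q.1)) ?_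
    (fun q _ => hF q.2.2 q.2.1 q.1)
  rw [Fintype.sum_prod_type]
  have h1 : ∀ z : Z, ∀ x : X, ∑ i, δ x i * p x z = p x z := by
    intro z x; rw [← Finset.sum_mul, (hδ x).2, one_mul]
  calc ∑ z : Z, ∑ q : X × Fin K, δ q.1 q.2 * p q.1 z
      = ∑ z : Z, ∑ x : X, p x z := by
        refine Finset.sum_congr rfl fun z _ => ?_
        rw [Fintype.sum_prod_type]
        exact Finset.sum_congr rfl fun x _ => h1 z x
    _ = 1 := by rw [Finset.sum_comm]; exact hps

lemma mixZ_pointwise {X Z : Type} [Fintype X] [Fintype Z] {K : ℕ} {a b : ℝ}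
    (F Ft : Fin K → X → Z → ℝ → ℝ) (p pt : X → Z → ℝ) (δ δt : X → Fin K → ℝ) (z : Z)
    (hF : ∀ i x, IsCdfOn a b (F i x z)) (hFt : ∀ i x, IsCdfOn a b (Ft i x z))
    (hp : ∀ x, 0 ≤ p x z) (hpt : ∀ x, 0 ≤ pt x z)
    (hpZ : 0 < ∑ x, p x z) (hptZ : 0 < ∑ x, pt x z)
    (hδt : ∀ x, (∀ i, 0 ≤ δt x i) ∧ ∑ i, δt x i = 1) (y : ℝ) :
    |mixZ K F p δ z y - mixZ K Ft pt δt z y|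
      ≤ (∑ x, ∑ i, |δ x i - δt x i|) + uzDisc K F Ft p pt z := by
  -- weight bounds
  have hw : ∀ x i (y' : ℝ), 0 ≤ (p x z / ∑ x', p x' z) * F i x z y' ∧
      (p x z / ∑ x', p x' z) * F i x z y' ≤ 1 := by
    intro x i y'
    have h1 : 0 ≤ p x z / ∑ x', p x' z := div_nonneg (hp x) hpZ.le
    have h2 : p x z / ∑ x', p x' z ≤ 1 := by
      rw [div_le_one hpZ]
      exact Finset.single_le_sum (fun x' _ => hp x') (Finset.mem_univ x)
    have h3 := (hF i x).2.2.2 y'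
    constructor
    · exact mul_nonneg h1 h3.1
    · calc (p x z / ∑ x', p x' z) * F i x z y' ≤ 1 * 1 :=
            mul_le_mul h2 h3.2 h3.1 zero_le_one
        _ = 1 := one_mul 1
  have hwt : ∀ x i (y' : ℝ), 0 ≤ (pt x z / ∑ x', pt x' z) * Ft i x z y' ∧
      (pt x z / ∑ x', pt x' z) * Ft i x z y' ≤ 1 := by
    intro x i y'
    have h1 : 0 ≤ pt x z / ∑ x', pt x' z := div_nonneg (hpt x) hptZ.le
    have h2 : pt x z / ∑ x', pt x' z ≤ 1 := by
      rw [div_le_one hptZ]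
      exact Finset.single_le_sum (fun x' _ => hpt x') (Finset.mem_univ x)
    have h3 := (hFt i x).2.2.2 y'
    constructor
    · exact mul_nonneg h1 h3.1
    · calc (pt x z / ∑ x', pt x' z) * Ft i x z y' ≤ 1 * 1 :=
            mul_le_mul h2 h3.2 h3.1 zero_le_one
        _ = 1 := one_mul 1
  -- per-x sup bound
  have hgle : ∀ x i, |(p x z / ∑ x', p x' z) * F i x z y -
        (pt x z / ∑ x', pt x' z) * Ft i x z y|
      ≤ ⨆ i' : Fin K, ⨆ y' : ℝ, |(p x z / ∑ x', p x' z) * F i' x z y' -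
        (pt x z / ∑ x', pt x' z) * Ft i' x z y'| := by
    intro x i
    have hbd : ∀ i', BddAbove (Set.range fun y' : ℝ =>
        |(p x z / ∑ x', p x' z) * F i' x z y' -
          (pt x z / ∑ x', pt x' z) * Ft i' x z y'|) := by
      intro i'
      refine ⟨2, fun v hv => ?_⟩
      obtain ⟨y', rfl⟩ := hv
      have h1 := hw x i' y'
      have h2 := hwt x i' y'
      rw [abs_sub_le_iff]
      constructor <;> linarith
    calc |(p x z / ∑ x', p x' z) * F i x z y -
          (pt x z / ∑ x', pt x' z) * Ft i x z y|
        ≤ ⨆ y' : ℝ, |(p x z / ∑ x', p x' z) * F i x z y' -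
            (pt x z / ∑ x', pt x' z) * Ft i x z y'| := le_ciSup (hbd i) y
      _ ≤ _ := le_ciSup (f := fun i' : Fin K => ⨆ y' : ℝ,
            |(p x z / ∑ x', p x' z) * F i' x z y' -
              (pt x z / ∑ x', pt x' z) * Ft i' x z y'|)
          (Set.Finite.bddAbove (Set.finite_range _)) i
  -- rewrite the difference
  have hrw : mixZ K F p δ z y - mixZ K Ft pt δt z y
      = ∑ x, ∑ i, ((δ x i - δt x i) * ((p x z / ∑ x', p x' z) * F i x z y)
          + δt x i * ((p x z / ∑ x', p x' z) * F i x z y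
            - (pt x z / ∑ x', pt x' z) * Ft i x z y)) := by
    simp only [mixZ, ← Finset.sum_sub_distrib]
    refine Finset.sum_congr rfl fun x _ => Finset.sum_congr rfl fun i _ => ?_
    ring
  rw [hrw]
  calc |∑ x, ∑ i, ((δ x i - δt x i) * ((p x z / ∑ x', p x' z) * F i x z y)
          + δt x i * ((p x z / ∑ x', p x' z) * F i x z y
            - (pt x z / ∑ x', pt x' z) * Ft i x z y))|
      ≤ ∑ x, ∑ i, |(δ x i - δt x i) * ((p x z / ∑ x', p x' z) * F i x z y)
          + δt x i * ((p x z / ∑ x', p x' z) * F i x z y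
            - (pt x z / ∑ x', pt x' z) * Ft i x z y)| := by
        refine (Finset.abs_sum_le_sum_abs _ _).trans (Finset.sum_le_sum fun x _ => ?_)
        exact Finset.abs_sum_le_sum_abs _ _
    _ ≤ ∑ x, ∑ i, (|δ x i - δt x i|
          + δt x i * (⨆ i' : Fin K, ⨆ y' : ℝ, |(p x z / ∑ x', p x' z) * F i' x z y' -
              (pt x z / ∑ x', pt x' z) * Ft i' x z y'|)) := by
        refine Finset.sum_le_sum fun x _ => Finset.sum_le_sum fun i _ => ?_
        refine (abs_add_le _ _).trans (add_le_add ?_ ?_)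
        · rw [abs_mul]
          have h1 := hw x i y
          calc |δ x i - δt x i| * |(p x z / ∑ x', p x' z) * F i x z y|
              ≤ |δ x i - δt x i| * 1 := by
                refine mul_le_mul_of_nonneg_left ?_ (abs_nonneg _)
                rw [abs_of_nonneg h1.1]; exact h1.2
            _ = |δ x i - δt x i| := mul_one _
        · rw [abs_mul, abs_of_nonneg ((hδt x).1 i)]
          exact mul_le_mul_of_nonneg_left (hgle x i) ((hδt x).1 i)
    _ = (∑ x, ∑ i, |δ x i - δt x i|) + uzDisc K F Ft p pt z := by
        rw [uzDisc, ← Finset.sum_add_distrib]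
        refine Finset.sum_congr rfl fun x _ => ?_
        rw [Finset.sum_add_distrib, ← Finset.sum_mul, (hδt x).2, one_mul]

lemma mixAll_pointwise {X Z : Type} [Fintype X] [Fintype Z] [Nonempty Z] {K : ℕ} {a b : ℝ}
    (F Ft : Fin K → X → Z → ℝ → ℝ) (p pt : X → Z → ℝ) (δ δt : X → Fin K → ℝ)
    (hF : ∀ i x z, IsCdfOn a b (F i x z)) (hFt : ∀ i x z, IsCdfOn a b (Ft i x z))
    (hp : ∀ x z, 0 ≤ p x z) (hpt : ∀ x z, 0 ≤ pt x z)
    (hps : ∑ x, ∑ z, p x z = 1)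
    (hpZ : ∀ z, 0 < ∑ x, p x z) (hptZ : ∀ z, 0 < ∑ x, pt x z)
    (hδt : ∀ x, (∀ i, 0 ≤ δt x i) ∧ ∑ i, δt x i = 1) (y : ℝ) :
    |mixAll K F p δ y - mixAll K Ft pt δt y|
      ≤ ((∑ x, ∑ i, |δ x i - δt x i|) + ⨆ z : Z, uzDisc K F Ft p pt z)
        + ∑ z, |(∑ x, p x z) - ∑ x, pt x z| := by
  have hmt01 : ∀ z (y' : ℝ), 0 ≤ mixZ K Ft pt δt z y' ∧ mixZ K Ft pt δt z y' ≤ 1 := by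
    intro z y'
    have hm : mixZ K Ft pt δt z ∈ {G : ℝ → ℝ | IsCdfOn a b G} :=
      mixZ_mem (isCdfOn_convex a b) (fun i x => hFt i x z) (fun x => hpt x z)
        (hptZ z) hδt
    exact hm.2.2.2 y'
  have hUz : ∀ z : Z, uzDisc K F Ft p pt z ≤ ⨆ z' : Z, uzDisc K F Ft p pt z' :=
    fun z => le_ciSup (Set.Finite.bddAbove (Set.finite_range _)) z
  have hA : ∀ z : Z, |mixZ K F p δ z y - mixZ K Ft pt δt z y|
      ≤ (∑ x, ∑ i, |δ x i - δt x i|) + ⨆ z' : Z, uzDisc K F Ft p pt z' := by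
    intro z
    refine (mixZ_pointwise F Ft p pt δ δt z (fun i x => hF i x z) (fun i x => hFt i x z)
      (fun x => hp x z) (fun x => hpt x z) (hpZ z) (hptZ z) hδt y).trans ?_
    exact add_le_add_right (hUz z) _
  have hrw : mixAll K F p δ y - mixAll K Ft pt δt y
      = ∑ z, ((∑ x, p x z) * (mixZ K F p δ z y - mixZ K Ft pt δt z y)
          + ((∑ x, p x z) - ∑ x, pt x z) * mixZ K Ft pt δt z y) := by
    simp only [mixAll, ← Finset.sum_sub_distrib]
    refine Finset.sum_congr rfl fun z _ => ?_
    rw [Finset.sum_sub_distrib]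
    ring
  rw [hrw]
  calc |∑ z, ((∑ x, p x z) * (mixZ K F p δ z y - mixZ K Ft pt δt z y)
          + ((∑ x, p x z) - ∑ x, pt x z) * mixZ K Ft pt δt z y)|
      ≤ ∑ z, ((∑ x, p x z) * ((∑ x, ∑ i, |δ x i - δt x i|)
            + ⨆ z' : Z, uzDisc K F Ft p pt z')
          + |(∑ x, p x z) - ∑ x, pt x z|) := by
        refine (Finset.abs_sum_le_sum_abs _ _).trans (Finset.sum_le_sum fun z _ => ?_)
        refine (abs_add_le _ _).trans (add_le_add ?_ ?_)
        · rw [abs_mul, abs_of_nonneg (hpZ z).le]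
          exact mul_le_mul_of_nonneg_left (hA z) (hpZ z).le
        · rw [abs_mul]
          calc |(∑ x, p x z) - ∑ x, pt x z| * |mixZ K Ft pt δt z y|
              ≤ |(∑ x, p x z) - ∑ x, pt x z| * 1 := by
                refine mul_le_mul_of_nonneg_left ?_ (abs_nonneg _)
                rw [abs_of_nonneg (hmt01 z y).1]; exact (hmt01 z y).2
            _ = _ := mul_one _
    _ = _ := by
        rw [Finset.sum_add_distrib, ← Finset.sum_mul]
        have : ∑ z, ∑ x, p x z = 1 := by rw [Finset.sum_comm]; exact hps
        rw [this, one_mul]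

lemma main_bound {X Z : Type} [Fintype X] [Fintype Z] [Nonempty Z]
    (K : ℕ) (a b : ℝ)
    (D : Set (ℝ → ℝ)) (hDsub : D ⊆ {G : ℝ → ℝ | IsCdfOn a b G}) (hDconv : Convex ℝ D)
    (T : (ℝ → ℝ) → ℝ) (S : (ℝ → ℝ) → (ℝ → ℝ) → ℝ)
    (hT : ∀ F ∈ D, ∀ G ∈ {G : ℝ → ℝ | IsCdfOn a b G}, |T F - T G| ≤ ⨆ y : ℝ, |F y - G y|)
    (hS : ∀ F ∈ D, ∀ Ft ∈ D, ∀ G ∈ {G : ℝ → ℝ | IsCdfOn a b G},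
      ∀ Gt ∈ {G : ℝ → ℝ | IsCdfOn a b G},
      |S F Ft - S G Gt| ≤ (⨆ y : ℝ, |F y - G y|) + ⨆ y : ℝ, |Ft y - Gt y|)
    (lam : ℝ) (hlam : lam ∈ Set.Icc (0:ℝ) 1)
    (F Ft : Fin K → X → Z → ℝ → ℝ)
    (hF : ∀ i x z, F i x z ∈ D) (hFt : ∀ i x z, IsCdfOn a b (Ft i x z))
    (p pt : X → Z → ℝ)
    (hp : ∀ x z, 0 ≤ p x z) (hpt : ∀ x z, 0 ≤ pt x z)
    (hps : ∑ x, ∑ z, p x z = 1) (hpts : ∑ x, ∑ z, pt x z = 1)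
    (hpZ : ∀ z, 0 < ∑ x, p x z) (hptZ : ∀ z, 0 < ∑ x, pt x z)
    (δ δt : X → Fin K → ℝ)
    (hδ : ∀ x, (∀ i, 0 ≤ δ x i) ∧ ∑ i, δ x i = 1)
    (hδt : ∀ x, (∀ i, 0 ≤ δt x i) ∧ ∑ i, δt x i = 1) :
    |Obj K T S lam F p δ - Obj K T S lam Ft pt δt|
        ≤ (1 + lam) * ((∑ x, ∑ i, |δ x i - δt x i|) + ⨆ z : Z, uzDisc K F Ft p pt z) +
            ∑ z, |(∑ x, p x z) - ∑ x, pt x z| := by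
  obtain ⟨hlam0, hlam1⟩ := hlam
  set A : ℝ := (∑ x, ∑ i, |δ x i - δt x i|) + ⨆ z : Z, uzDisc K F Ft p pt z with hA
  set P : ℝ := ∑ z, |(∑ x, p x z) - ∑ x, pt x z| with hP
  have hFcdf : ∀ i x z, IsCdfOn a b (F i x z) := fun i x z => hDsub (hF i x z)
  -- memberships
  have hmAF : mixAll K F p δ ∈ D := mixAll_mem hDconv hF hp hps hpZ hδ
  have hmZF : ∀ z, mixZ K F p δ z ∈ D := fun z =>
    mixZ_mem hDconv (fun i x => hF i x z) (fun x => hp x z) (hpZ z) hδ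
  have hmAFt : mixAll K Ft pt δt ∈ {G : ℝ → ℝ | IsCdfOn a b G} :=
    mixAll_mem (isCdfOn_convex a b) hFt hpt hpts hptZ hδt
  have hmZFt : ∀ z, mixZ K Ft pt δt z ∈ {G : ℝ → ℝ | IsCdfOn a b G} := fun z =>
    mixZ_mem (isCdfOn_convex a b) (fun i x => hFt i x z) (fun x => hpt x z) (hptZ z) hδt
  -- sup bounds
  have hUz : ∀ z : Z, uzDisc K F Ft p pt z ≤ ⨆ z' : Z, uzDisc K F Ft p pt z' :=
    fun z => le_ciSup (Set.Finite.bddAbove (Set.finite_range _)) z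
  have sA : (⨆ y : ℝ, |mixAll K F p δ y - mixAll K Ft pt δt y|) ≤ A + P :=
    ciSup_le fun y => mixAll_pointwise F Ft p pt δ δt hFcdf hFt hp hpt hps hpZ hptZ hδt y
  have sZ : ∀ z, (⨆ y : ℝ, |mixZ K F p δ z y - mixZ K Ft pt δt z y|) ≤ A := by
    intro z
    refine ciSup_le fun y => ?_
    refine (mixZ_pointwise F Ft p pt δ δt z (fun i x => hFcdf i x z) (fun i x => hFt i x z)
      (fun x => hp x z) (fun x => hpt x z) (hpZ z) (hptZ z) hδt y).trans ?_
    exact add_le_add_right (hUz z) _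
  -- T bound
  have hTb : |T (mixAll K F p δ) - T (mixAll K Ft pt δt)| ≤ A + P :=
    (hT _ hmAF _ hmAFt).trans sA
  -- S bounds
  have hSb : ∀ z, |S (mixZ K F p δ z) (mixAll K F p δ)
      - S (mixZ K Ft pt δt z) (mixAll K Ft pt δt)| ≤ 2 * A + P := by
    intro z
    have := (hS _ (hmZF z) _ hmAF _ (hmZFt z) _ hmAFt).trans (add_le_add (sZ z) sA)
    linarith
  -- sup of S bound
  have hsup : |(⨆ z : Z, S (mixZ K F p δ z) (mixAll K F p δ))
      - ⨆ z : Z, S (mixZ K Ft pt δt z) (mixAll K Ft pt δt)| ≤ 2 * A + P := by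
    rw [abs_sub_le_iff]
    constructor
    · rw [sub_le_iff_le_add]
      refine ciSup_le fun z => ?_
      have h1 := (abs_sub_le_iff.mp (hSb z)).1
      have h2 : S (mixZ K Ft pt δt z) (mixAll K Ft pt δt)
          ≤ ⨆ z' : Z, S (mixZ K Ft pt δt z') (mixAll K Ft pt δt) :=
        le_ciSup (f := fun z' : Z => S (mixZ K Ft pt δt z') (mixAll K Ft pt δt))
          (Set.Finite.bddAbove (Set.finite_range _)) z
      linarith
    · rw [sub_le_iff_le_add]
      refine ciSup_le fun z => ?_
      have h1 := (abs_sub_le_iff.mp (hSb z)).2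
      have h2 : S (mixZ K F p δ z) (mixAll K F p δ)
          ≤ ⨆ z' : Z, S (mixZ K F p δ z') (mixAll K F p δ) :=
        le_ciSup (f := fun z' : Z => S (mixZ K F p δ z') (mixAll K F p δ))
          (Set.Finite.bddAbove (Set.finite_range _)) z
      linarith
  -- combine
  have hObj : Obj K T S lam F p δ - Obj K T S lam Ft pt δt
      = (1 - lam) * (T (mixAll K F p δ) - T (mixAll K Ft pt δt))
        - lam * ((⨆ z : Z, S (mixZ K F p δ z) (mixAll K F p δ))
          - ⨆ z : Z, S (mixZ K Ft pt δt z) (mixAll K Ft pt δt)) := by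
    simp only [Obj]; ring
  rw [hObj]
  calc |(1 - lam) * (T (mixAll K F p δ) - T (mixAll K Ft pt δt))
        - lam * ((⨆ z : Z, S (mixZ K F p δ z) (mixAll K F p δ))
          - ⨆ z : Z, S (mixZ K Ft pt δt z) (mixAll K Ft pt δt))|
      ≤ (1 - lam) * |T (mixAll K F p δ) - T (mixAll K Ft pt δt)|
        + lam * |(⨆ z : Z, S (mixZ K F p δ z) (mixAll K F p δ))
          - ⨆ z : Z, S (mixZ K Ft pt δt z) (mixAll K Ft pt δt)| := by
        refine (abs_sub _ _).trans ?_
        rw [abs_mul, abs_mul, abs_of_nonneg (by linarith : (0:ℝ) ≤ 1 - lam),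
          abs_of_nonneg hlam0]
    _ ≤ (1 - lam) * (A + P) + lam * (2 * A + P) := by
        refine add_le_add ?_ ?_
        · exact mul_le_mul_of_nonneg_left hTb (by linarith)
        · exact mul_le_mul_of_nonneg_left hsup hlam0
    _ = (1 + lam) * A + P := by ring

/-- Lipschitz continuity of the penalized objective in `(δ, F)`. -/
theorem stmt_8 {X Z : Type} [Fintype X] [Nonempty X] [Fintype Z] [Nonempty Z]
    (K : ℕ) (hK : 2 ≤ K) (a b : ℝ)
    (Dcdf : Set (ℝ → ℝ)) (hDcdf : Dcdf = {F | IsCdfOn a b F})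
    (D : Set (ℝ → ℝ)) (hDsub : D ⊆ Dcdf) (hDconv : Convex ℝ D) (hDne : D.Nonempty)
    (T : (ℝ → ℝ) → ℝ) (S : (ℝ → ℝ) → (ℝ → ℝ) → ℝ)
    (hT : ∀ F ∈ D, ∀ G ∈ Dcdf, |T F - T G| ≤ ⨆ y : ℝ, |F y - G y|)
    (hS : ∀ F ∈ D, ∀ Ft ∈ D, ∀ G ∈ Dcdf, ∀ Gt ∈ Dcdf,
      |S F Ft - S G Gt| ≤ (⨆ y : ℝ, |F y - G y|) + ⨆ y : ℝ, |Ft y - Gt y|)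
    (hS0 : ∀ F, S F F = 0) (hSnn : ∀ F G, 0 ≤ S F G)
    (lam : ℝ) (hlam : lam ∈ Set.Icc (0:ℝ) 1)
    (F Ft : Fin K → X → Z → ℝ → ℝ)
    (hF : ∀ i x z, F i x z ∈ D) (hFt : ∀ i x z, Ft i x z ∈ Dcdf)
    (p pt : X → Z → ℝ)
    (hp : ∀ x z, 0 ≤ p x z) (hpt : ∀ x z, 0 ≤ pt x z)
    (hps : ∑ x, ∑ z, p x z = 1) (hpts : ∑ x, ∑ z, pt x z = 1)
    (hpZ : ∀ z, 0 < ∑ x, p x z) (hptZ : ∀ z, 0 < ∑ x, pt x z)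
    (δ δt : X → Fin K → ℝ)
    (hδ : ∀ x, (∀ i, 0 ≤ δ x i) ∧ ∑ i, δ x i = 1)
    (hδt : ∀ x, (∀ i, 0 ≤ δt x i) ∧ ∑ i, δt x i = 1) :
    |Obj K T S lam F p δ - Obj K T S lam Ft pt δt|
        ≤ (1 + lam) * ((∑ x, ∑ i, |δ x i - δt x i|) + ⨆ z : Z, uzDisc K F Ft p pt z) +
            ∑ z, |(∑ x, p x z) - ∑ x, pt x z| ∧
      ∀ δ₁ δ₂ : X → Fin K → ℝ,
        (∀ x, (∀ i, 0 ≤ δ₁ x i) ∧ ∑ i, δ₁ x i = 1) →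
        (∀ x, (∀ i, 0 ≤ δ₂ x i) ∧ ∑ i, δ₂ x i = 1) →
        |Obj K T S lam F p δ₁ - Obj K T S lam F p δ₂|
          ≤ (1 + lam) * ∑ x, ∑ i, |δ₁ x i - δ₂ x i| := by
  subst hDcdf
  refine ⟨main_bound K a b D hDsub hDconv T S hT hS lam hlam F Ft hF hFt p pt hp hpt
    hps hpts hpZ hptZ δ δt hδ hδt, ?_⟩
  intro δ₁ δ₂ h1 h2
  haveI hnK : Nonempty (Fin K) := ⟨⟨0, by omega⟩⟩
  have hmain := main_bound K a b D hDsub hDconv T S hT hS lam hlam F F hF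
    (fun i x z => hDsub (hF i x z)) p p hp hp hps hps hpZ hpZ δ₁ δ₂ h1 h2
  have hu : ∀ z : Z, uzDisc K F F p p z = 0 := by
    intro z
    rw [uzDisc]
    apply Finset.sum_eq_zero
    intro x _
    simp [sub_self, abs_zero, ciSup_const]
  simp only [hu, ciSup_const, sub_self, abs_zero, Finset.sum_const_zero, add_zero] at hmain
  exact hmain
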